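/- For every CN-formula φ with φ ∈ CnCK_R, the translation Tr_φ is a faithful embedding of CnK into CnCK_R: for all sets Γ, Δ of MD-formulas, Γ ⊨_CnK Δ if and only if Tr_φ(Γ) ⊨_{CnCK_R} Tr_φ(Δ). -/

import Mathlib

/-- Formulas of the modal language MD. -/
inductive MDForm : Type
  | atom : ℕ → MDForm
  | conj : MDForm → MDForm → MDForm
  | disj : MDForm → MDForm → MDForm
  | impl : MDForm → MDForm → MDForm
  | neg  : MDForm → MDForm
  | box  : MDForm → MDForm
  | dia  : MDForm → MDForm

/-- A Fischer–Servi modal model. -/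
structure FSModel where
  W : Type
  nonempty : Nonempty W
  le : W → W → Prop
  le_refl : ∀ w, le w w
  le_trans : ∀ {w v u}, le w v → le v u → le w u
  R : W → W → Prop
  fs1 : ∀ {w w' v}, le w w' → R w v → ∃ v', R w' v' ∧ le v v'
  fs2 : ∀ {w v v'}, R w v → le v v' → ∃ w', le w w' ∧ R w' v'
  Vpos : ℕ → W → Prop
  Vneg : ℕ → W → Prop
  Vpos_mono : ∀ (p : ℕ) {w v}, le w v → Vpos p w → Vpos p v
  Vneg_mono : ∀ (p : ℕ) {w v}, le w v → Vneg p w → Vneg p v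

/-- `M.sat true φ w` is verification `M,w ⊨⁺ φ`; `M.sat false φ w` is falsification `M,w ⊨⁻ φ`. -/
def FSModel.sat (M : FSModel) : Bool → MDForm → M.W → Prop
  | true,  .atom p,   w => M.Vpos p w
  | false, .atom p,   w => M.Vneg p w
  | true,  .conj φ ψ, w => M.sat true φ w ∧ M.sat true ψ w
  | false, .conj φ ψ, w => M.sat false φ w ∨ M.sat false ψ w
  | true,  .disj φ ψ, w => M.sat true φ w ∨ M.sat true ψ w
  | false, .disj φ ψ, w => M.sat false φ w ∧ M.sat false ψ w
  | true,  .impl φ ψ, w => ∀ v, M.le w v → M.sat true φ v → M.sat true ψ v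
  | false, .impl φ ψ, w => ∀ v, M.le w v → M.sat true φ v → M.sat false ψ v
  | true,  .neg φ,    w => M.sat false φ w
  | false, .neg φ,    w => M.sat true φ w
  | true,  .box φ,    w => ∀ v, M.le w v → ∀ u, M.R v u → M.sat true φ u
  | false, .box φ,    w => ∀ v, M.le w v → ∀ u, M.R v u → M.sat false φ u
  | true,  .dia φ,    w => ∃ u, M.R w u ∧ M.sat true φ u
  | false, .dia φ,    w => ∃ u, M.R w u ∧ M.sat false φ u

/-- CnK-validity: `φ ∈ CnK`. -/
def CnKvalid (φ : MDForm) : Prop :=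
  ∀ (M : FSModel) (w : M.W), M.sat true φ w

/-- The consequence relation of the logic CnK: `Γ ⊨_CnK Δ`. -/
def CnKconseq (Γ Δ : Set MDForm) : Prop :=
  ∀ (M : FSModel) (w : M.W), (∀ γ ∈ Γ, M.sat true γ w) → ∃ δ ∈ Δ, M.sat true δ w

/-- Formulas of the conditional language CN. -/
inductive CNForm : Type
  | atom : ℕ → CNForm
  | conj : CNForm → CNForm → CNForm
  | disj : CNForm → CNForm → CNForm
  | impl : CNForm → CNForm → CNForm
  | neg  : CNForm → CNForm
  | boxto : CNForm → CNForm → CNForm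
  | diato : CNForm → CNForm → CNForm

/-- A Fischer–Servi conditional model. -/
structure FSCModel where
  W : Type
  nonempty : Nonempty W
  le : W → W → Prop
  le_refl : ∀ w, le w w
  le_trans : ∀ {w v u}, le w v → le v u → le w u
  R : W → Set W × Set W → W → Prop
  fs1 : ∀ {w w' v} (XY : Set W × Set W), le w w' → R w XY v → ∃ v', R w' XY v' ∧ le v v'
  fs2 : ∀ {w v v'} (XY : Set W × Set W), R w XY v → le v v' → ∃ w', le w w' ∧ R w' XY v'
  Vpos : ℕ → W → Prop
  Vneg : ℕ → W → Prop
  Vpos_mono : ∀ (p : ℕ) {w v}, le w v → Vpos p w → Vpos p v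
  Vneg_mono : ∀ (p : ℕ) {w v}, le w v → Vneg p w → Vneg p v

/-- `M.sat true φ w` is verification `M,w ⊨⁺ φ`; `M.sat false φ w` is falsification `M,w ⊨⁻ φ`.
In the conditional clauses, the accessibility relation is indexed by the bi-extension
`({x | M,x ⊨⁺ ψ}, {x | M,x ⊨⁻ ψ})` of the antecedent ψ. -/
def FSCModel.sat (M : FSCModel) : Bool → CNForm → M.W → Prop
  | true,  .atom p,   w => M.Vpos p w
  | false, .atom p,   w => M.Vneg p w
  | true,  .conj φ ψ, w => M.sat true φ w ∧ M.sat true ψ w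
  | false, .conj φ ψ, w => M.sat false φ w ∨ M.sat false ψ w
  | true,  .disj φ ψ, w => M.sat true φ w ∨ M.sat true ψ w
  | false, .disj φ ψ, w => M.sat false φ w ∧ M.sat false ψ w
  | true,  .impl φ ψ, w => ∀ v, M.le w v → M.sat true φ v → M.sat true ψ v
  | false, .impl φ ψ, w => ∀ v, M.le w v → M.sat true φ v → M.sat false ψ v
  | true,  .neg φ,    w => M.sat false φ w
  | false, .neg φ,    w => M.sat true φ w
  | true,  .boxto ψ χ, w => ∀ v, M.le w v → ∀ u,
      M.R v ({x | M.sat true ψ x}, {x | M.sat false ψ x}) u → M.sat true χ u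
  | false, .boxto ψ χ, w => ∀ v, M.le w v → ∀ u,
      M.R v ({x | M.sat true ψ x}, {x | M.sat false ψ x}) u → M.sat false χ u
  | true,  .diato ψ χ, w => ∃ u,
      M.R w ({x | M.sat true ψ x}, {x | M.sat false ψ x}) u ∧ M.sat true χ u
  | false, .diato ψ χ, w => ∃ u,
      M.R w ({x | M.sat true ψ x}, {x | M.sat false ψ x}) u ∧ M.sat false χ u

/-- CnCK-validity: `φ ∈ CnCK`. -/
def CnCKvalid (φ : CNForm) : Prop :=
  ∀ (M : FSCModel) (w : M.W), M.sat true φ w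

/-- The consequence relation of the logic CnCK: `Γ ⊨_CnCK Δ`. -/
def CnCKconseq (Γ Δ : Set CNForm) : Prop :=
  ∀ (M : FSCModel) (w : M.W), (∀ γ ∈ Γ, M.sat true γ w) → ∃ δ ∈ Δ, M.sat true δ w

/-- A Fischer–Servi conditional model is reflexive iff `R(w,(X,Y),v)` implies `v ∈ X`. -/
def FSCModel.Reflexive (M : FSCModel) : Prop :=
  ∀ {w v : M.W} (XY : Set M.W × Set M.W), M.R w XY v → v ∈ XY.1

/-- CnCK_R-validity: `φ ∈ CnCK_R`. -/
def CnCKRvalid (φ : CNForm) : Prop :=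
  ∀ (M : FSCModel), M.Reflexive → ∀ w : M.W, M.sat true φ w

/-- The consequence relation of the logic CnCK_R: `Γ ⊨_{CnCK_R} Δ`. -/
def CnCKRconseq (Γ Δ : Set CNForm) : Prop :=
  ∀ (M : FSCModel), M.Reflexive → ∀ w : M.W,
    (∀ γ ∈ Γ, M.sat true γ w) → ∃ δ ∈ Δ, M.sat true δ w

/-- The translation `Tr_φ` from MD-formulas to CN-formulas. -/
def TrPhi (φ : CNForm) : MDForm → CNForm
  | .atom p => .atom p
  | .conj ψ χ => .conj (TrPhi φ ψ) (TrPhi φ χ)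
  | .disj ψ χ => .disj (TrPhi φ ψ) (TrPhi φ χ)
  | .impl ψ χ => .impl (TrPhi φ ψ) (TrPhi φ χ)
  | .neg ψ => .neg (TrPhi φ ψ)
  | .box ψ => .boxto φ (TrPhi φ ψ)
  | .dia ψ => .diato φ (TrPhi φ ψ)

/-- From a conditional model and a formula φ, the modal model whose relation is the
φ-indexed slice. -/
def FSCModel.toFS (M : FSCModel) (φ : CNForm) : FSModel where
  W := M.W
  nonempty := M.nonempty
  le := M.le
  le_refl := M.le_refl
  le_trans := M.le_trans
  R := fun w v => M.R w ({x | M.sat true φ x}, {x | M.sat false φ x}) v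
  fs1 := fun h hr => M.fs1 _ h hr
  fs2 := fun hr h => M.fs2 _ hr h
  Vpos := M.Vpos
  Vneg := M.Vneg
  Vpos_mono := M.Vpos_mono
  Vneg_mono := M.Vneg_mono

lemma sat_toFS (M : FSCModel) (φ : CNForm) :
    ∀ (ψ : MDForm) (b : Bool) (w : M.W),
      M.sat b (TrPhi φ ψ) w ↔ (M.toFS φ).sat b ψ w := by
  intro ψ
  induction ψ with
  | atom p => intro b w; cases b <;> rfl
  | conj ψ χ ihψ ihχ => intro b w; cases b <;>
      simp [TrPhi, FSModel.sat, FSCModel.sat, ihψ, ihχ]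
  | disj ψ χ ihψ ihχ => intro b w; cases b <;>
      simp [TrPhi, FSModel.sat, FSCModel.sat, ihψ, ihχ]
  | impl ψ χ ihψ ihχ => intro b w; cases b <;>
      simp only [TrPhi, FSModel.sat, FSCModel.sat, FSCModel.toFS, ihψ, ihχ]
  | neg ψ ih => intro b w; cases b <;>
      simp only [TrPhi, FSModel.sat, FSCModel.sat, ih]
  | box ψ ih => intro b w; cases b <;>
      simp only [TrPhi, FSModel.sat, FSCModel.sat, FSCModel.toFS, ih]
  | dia ψ ih => intro b w; cases b <;>
      simp only [TrPhi, FSModel.sat, FSCModel.sat, FSCModel.toFS, ih]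

/-- From a modal model, a reflexive conditional model. -/
def FSModel.toFSC (N : FSModel) : FSCModel where
  W := N.W
  nonempty := N.nonempty
  le := N.le
  le_refl := N.le_refl
  le_trans := N.le_trans
  R := fun w XY v => N.R w v ∧ XY.1 = Set.univ
  fs1 := fun _ h hr => by
    obtain ⟨v', hv', hle⟩ := N.fs1 h hr.1
    exact ⟨v', ⟨hv', hr.2⟩, hle⟩
  fs2 := fun _ hr h => by
    obtain ⟨w', hle, hw'⟩ := N.fs2 hr.1 h
    exact ⟨w', hle, hw', hr.2⟩
  Vpos := N.Vpos
  Vneg := N.Vneg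
  Vpos_mono := N.Vpos_mono
  Vneg_mono := N.Vneg_mono

lemma toFSC_reflexive (N : FSModel) : N.toFSC.Reflexive := by
  intro w v XY hR
  rw [hR.2]; trivial

lemma sat_toFSC (N : FSModel) (φ : CNForm)
    (huniv : {x | N.toFSC.sat true φ x} = Set.univ) :
    ∀ (ψ : MDForm) (b : Bool) (w : N.W),
      N.toFSC.sat b (TrPhi φ ψ) w ↔ N.sat b ψ w := by
  have hle : ∀ w v : N.W, N.toFSC.le w v ↔ N.le w v := fun _ _ => Iff.rfl
  have hR : ∀ (w : N.W) (XY) (v : N.W),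
      N.toFSC.R w XY v ↔ (N.R w v ∧ XY.1 = Set.univ) := fun _ _ _ => Iff.rfl
  intro ψ
  induction ψ with
  | atom p => intro b w; cases b <;> rfl
  | conj ψ χ ihψ ihχ => intro b w; cases b <;>
      simp [TrPhi, FSModel.sat, FSCModel.sat, ihψ, ihχ]
  | disj ψ χ ihψ ihχ => intro b w; cases b <;>
      simp [TrPhi, FSModel.sat, FSCModel.sat, ihψ, ihχ]
  | impl ψ χ ihψ ihχ => intro b w; cases b <;>
      (simp only [TrPhi, FSModel.sat, FSCModel.sat, hle, ihψ, ihχ];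
        exact forall_congr' fun v => imp_congr_right fun _ => imp_congr (ihψ true v) (ihχ _ v))
  | neg ψ ih => intro b w; cases b <;>
      simp only [TrPhi, FSModel.sat, FSCModel.sat, ih]
  | box ψ ih => intro b w; cases b <;>
      (simp only [TrPhi, FSModel.sat, FSCModel.sat, hle, hR, ih, huniv,
        and_true];
        exact forall_congr' fun v => imp_congr_right fun _ => forall_congr' fun u =>
          imp_congr ⟨fun h => h.1, fun h => ⟨h, rfl⟩⟩ (ih _ u))
  | dia ψ ih => intro b w; cases b <;>
      (simp only [TrPhi, FSModel.sat, FSCModel.sat, hR, ih, huniv,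
        and_true];
        exact exists_congr fun u => and_congr ⟨fun h => h.1, fun h => ⟨h, rfl⟩⟩ (ih _ u))

/-- for φ ∈ CnCK_R, Tr_φ faithfully embeds CnK into CnCK_R. -/
theorem Tr_faithful_embedding_CnK_into_CnCKR (φ : CNForm) (hφ : CnCKRvalid φ)
    (Γ Δ : Set MDForm) :
    CnKconseq Γ Δ ↔ CnCKRconseq (TrPhi φ '' Γ) (TrPhi φ '' Δ) := by
  constructor
  · intro h M hrefl w hΓ
    obtain ⟨δ, hδ, hs⟩ := h (M.toFS φ) w (fun γ hγ =>
      (sat_toFS M φ γ true w).mp (hΓ _ ⟨γ, hγ, rfl⟩))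
    exact ⟨TrPhi φ δ, ⟨δ, hδ, rfl⟩, (sat_toFS M φ δ true w).mpr hs⟩
  · intro h N w hΓ
    have huniv : {x | N.toFSC.sat true φ x} = Set.univ :=
      Set.eq_univ_of_forall (fun x => hφ N.toFSC (toFSC_reflexive N) x)
    obtain ⟨δ', ⟨δ, hδ, rfl⟩, hs⟩ := h N.toFSC (toFSC_reflexive N) w
      (by rintro γ' ⟨γ, hγ, rfl⟩; exact (sat_toFSC N φ huniv γ true w).mpr (hΓ γ hγ))
    exact ⟨δ, hδ, (sat_toFSC N φ huniv δ true w).mp hs⟩
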